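/- Let α > 0, let w ∈ ℝⁿ have all components w_r > 0, let F ⊆ ℝ≥0ⁿ be a convex set, and let x* ∈ F have all components x*_r > 0. Then the following are equivalent: (i) for every x ∈ F, ∑_{r=1}^n w_r (x_r − x*_r)/x*_r^α ≤ 0; (ii) x* maximizes the α-fair utility among all strictly positive points of F, i.e., f^α(x*) ≥ f^α(x) for every x ∈ F with all components x_r > 0, where f^α(x) = ∑_r w_r x_r^{1−α}/(1−α) if α ≠ 1 and f^α(x) = ∑_r w_r log x_r if α = 1. -/

import Mathlib

open scoped BigOperators

/-- Bernoulli-type inequality: for `p < 1`, `p ≠ 0`, `u > 0`, `(u^p - 1)/p ≤ u - 1`. -/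
lemma key_bern (p u : ℝ) (hp : p < 1) (hp0 : p ≠ 0) (hu : 0 < u) :
    (u ^ p - 1) / p ≤ u - 1 := by
  rcases lt_or_gt_of_ne hp0 with hneg | hpos
  · -- p < 0 : show u^p ≥ 1 + p (u - 1), then divide by p < 0
    have h1p : (0:ℝ) < 1 - p := by linarith
    have hupos : 0 < u ^ p := Real.rpow_pos_of_pos hu p
    have amgm := Real.geom_mean_le_arith_mean2_weighted
      (w₁ := 1/(1-p)) (w₂ := -p/(1-p)) (p₁ := u ^ p) (p₂ := u)
      (by positivity) (div_nonneg (by linarith) h1p.le) hupos.le hu.le (by field_simp; ring)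
    have hprod : (u ^ p) ^ (1/(1-p)) * u ^ (-p/(1-p)) = 1 := by
      rw [← Real.rpow_mul hu.le, ← Real.rpow_add hu]
      rw [show p * (1/(1-p)) + -p/(1-p) = 0 by field_simp; ring]
      exact Real.rpow_zero u
    rw [hprod] at amgm
    -- 1 ≤ (1/(1-p)) * u^p + (-p/(1-p)) * u
    have key : p * (u - 1) ≤ u ^ p - 1 := by
      have h2 : (1-p) * 1 ≤ (1-p) * ((1/(1-p)) * u ^ p + (-p/(1-p)) * u) :=
        mul_le_mul_of_nonneg_left amgm h1p.le
      have h3 : (1-p) * ((1/(1-p)) * u ^ p + (-p/(1-p)) * u) = u ^ p - p * u := by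
        field_simp
        ring
      nlinarith [h2, h3]
    rw [div_le_iff_of_neg hneg]
    nlinarith [key]
  · -- 0 < p < 1
    have amgm := Real.geom_mean_le_arith_mean2_weighted
      (w₁ := p) (w₂ := 1 - p) (p₁ := u) (p₂ := 1)
      hpos.le (by linarith) hu.le zero_le_one (by ring)
    rw [Real.one_rpow, mul_one] at amgm
    rw [div_le_iff₀ hpos]
    nlinarith [amgm]

/-- Per-coordinate gradient inequality for the α-fair utility, `α ≠ 1`. -/
lemma coord_ineq (α s t : ℝ) (hα : 0 < α) (hα1 : α ≠ 1) (hs : 0 < s) (ht : 0 < t) :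
    t ^ (1 - α) / (1 - α) - s ^ (1 - α) / (1 - α) ≤ (t - s) / s ^ α := by
  set p : ℝ := 1 - α with hpdef
  have hp : p < 1 := by simp only [hpdef]; linarith
  have hp0 : p ≠ 0 := by simp only [hpdef]; intro h; apply hα1; linarith
  have h := key_bern p (t / s) hp hp0 (div_pos ht hs)
  rw [Real.div_rpow ht.le hs.le] at h
  have hsp : 0 < s ^ p := Real.rpow_pos_of_pos hs p
  have hsa : 0 < s ^ α := Real.rpow_pos_of_pos hs α
  have hpow : s ^ p * s ^ α = s := by
    rw [← Real.rpow_add hs, show p + α = 1 by simp [hpdef], Real.rpow_one]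
  have hmul := mul_le_mul_of_nonneg_right h hsp.le
  have e1 : (t ^ p / s ^ p - 1) / p * s ^ p = t ^ p / p - s ^ p / p := by
    field_simp
  have e2 : (t / s - 1) * s ^ p = (t - s) / s ^ α := by
    rw [eq_div_iff hsa.ne', mul_assoc, hpow]
    field_simp
  rw [e1, e2] at hmul
  exact hmul

theorem mo_walrand_characterization (n : ℕ) (α : ℝ) (hα : 0 < α)
    (w : Fin n → ℝ) (hw : ∀ r, 0 < w r)
    (F : Set (Fin n → ℝ)) (hFconv : Convex ℝ F) (hFnn : ∀ x ∈ F, ∀ r, 0 ≤ x r)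
    (xs : Fin n → ℝ) (hxsF : xs ∈ F) (hxs_pos : ∀ r, 0 < xs r) :
    (∀ x ∈ F, ∑ r, w r * (x r - xs r) / xs r ^ α ≤ 0) ↔
    (∀ x ∈ F, (∀ r, 0 < x r) →
      (if α = 1 then ∑ r, w r * Real.log (x r)
        else ∑ r, w r * x r ^ (1 - α) / (1 - α))
      ≤ (if α = 1 then ∑ r, w r * Real.log (xs r)
        else ∑ r, w r * xs r ^ (1 - α) / (1 - α))) := by
  constructor
  · -- (i) → (ii) by concavity (tangent line inequality)
    intro h x hx hxpos
    have hsum := h x hx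
    split_ifs with h1
    · subst h1
      rw [← sub_nonpos, ← Finset.sum_sub_distrib]
      refine le_trans (Finset.sum_le_sum ?_) hsum
      intro r _
      have hlog : Real.log (x r) - Real.log (xs r) ≤ (x r - xs r) / xs r := by
        rw [← Real.log_div (hxpos r).ne' (hxs_pos r).ne']
        have h2 := Real.log_le_sub_one_of_pos (div_pos (hxpos r) (hxs_pos r))
        have e : x r / xs r - 1 = (x r - xs r) / xs r := by
          rw [sub_div, div_self (hxs_pos r).ne']
        linarith
      calc w r * Real.log (x r) - w r * Real.log (xs r)
          = w r * (Real.log (x r) - Real.log (xs r)) := by ring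
        _ ≤ w r * ((x r - xs r) / xs r) := mul_le_mul_of_nonneg_left hlog (hw r).le
        _ = w r * (x r - xs r) / xs r ^ (1 : ℝ) := by rw [Real.rpow_one]; ring
    · rw [← sub_nonpos, ← Finset.sum_sub_distrib]
      refine le_trans (Finset.sum_le_sum ?_) hsum
      intro r _
      have hc := coord_ineq α (xs r) (x r) hα h1 (hxs_pos r) (hxpos r)
      calc w r * x r ^ (1 - α) / (1 - α) - w r * xs r ^ (1 - α) / (1 - α)
          = w r * (x r ^ (1 - α) / (1 - α) - xs r ^ (1 - α) / (1 - α)) := by ring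
        _ ≤ w r * ((x r - xs r) / xs r ^ α) := mul_le_mul_of_nonneg_left hc (hw r).le
        _ = w r * (x r - xs r) / xs r ^ α := by ring
  · -- (ii) → (i) by differentiating along the segment
    intro h x hx
    set d : Fin n → ℝ := fun r => x r - xs r with hd
    have hyF : ∀ t : ℝ, t ∈ Set.Ioo (0:ℝ) 1 → (fun r => xs r + t * d r) ∈ F := by
      intro t ht
      have hmem := hFconv hxsF hx (by linarith [ht.2] : (0:ℝ) ≤ 1 - t) ht.1.le (by ring)
      convert hmem using 1
      funext r
      simp only [hd, Pi.add_apply, Pi.smul_apply, smul_eq_mul]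
      ring
    have hypos : ∀ t : ℝ, t ∈ Set.Ioo (0:ℝ) 1 → ∀ r, 0 < xs r + t * d r := by
      intro t ht r
      have h1 : 0 < (1 - t) * xs r := mul_pos (by linarith [ht.2]) (hxs_pos r)
      have h2 : 0 ≤ t * x r := mul_nonneg ht.1.le (hFnn x hx r)
      have e : xs r + t * d r = (1 - t) * xs r + t * x r := by
        simp only [hd]; ring
      rw [e]; linarith
    set g : ℝ → ℝ := fun t =>
      if α = 1 then ∑ r, w r * Real.log (xs r + t * d r)
      else ∑ r, w r * (xs r + t * d r) ^ (1 - α) / (1 - α) with hgdef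
    have hg0 : ∀ t : ℝ, t ∈ Set.Ioo (0:ℝ) 1 → g t ≤ g 0 := by
      intro t ht
      have := h _ (hyF t ht) (hypos t ht)
      simpa [hgdef, hd] using this
    have hderiv : HasDerivAt g (∑ r, w r * (x r - xs r) / xs r ^ α) 0 := by
      by_cases h1 : α = 1
      · subst h1
        simp only [hgdef, if_pos rfl]
        have hterm : ∀ r ∈ Finset.univ,
            HasDerivAt (fun t : ℝ => w r * Real.log (xs r + t * d r))
              (w r * (x r - xs r) / xs r ^ (1:ℝ)) 0 := by
          intro r _
          have hlin : HasDerivAt (fun t : ℝ => xs r + t * d r) (d r) 0 := by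
            simpa using ((hasDerivAt_id (0:ℝ)).mul_const (d r)).const_add (xs r)
          have hne : xs r + 0 * d r ≠ 0 := by simpa using (hxs_pos r).ne'
          have := (hlin.log hne).const_mul (w r)
          refine this.congr_deriv ?_
          rw [Real.rpow_one]
          simp only [hd, zero_mul, add_zero]
          ring
        exact HasDerivAt.fun_sum hterm
      · simp only [hgdef, if_neg h1]
        have hterm : ∀ r ∈ Finset.univ,
            HasDerivAt (fun t : ℝ => w r * (xs r + t * d r) ^ (1 - α) / (1 - α))
              (w r * (x r - xs r) / xs r ^ α) 0 := by
          intro r _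
          have hlin : HasDerivAt (fun t : ℝ => xs r + t * d r) (d r) 0 := by
            simpa using ((hasDerivAt_id (0:ℝ)).mul_const (d r)).const_add (xs r)
          have hne : (fun t : ℝ => xs r + t * d r) 0 ≠ 0 := by
            simpa using (hxs_pos r).ne'
          have hrw := hlin.rpow_const (p := 1 - α) (Or.inl hne)
          have := (hrw.const_mul (w r)).div_const (1 - α)
          refine this.congr_deriv ?_
          have hα1 : (1:ℝ) - α ≠ 0 := by intro hc; apply h1; linarith
          have hx0 : xs r + 0 * d r = xs r := by ring
          have hsne : (xs r : ℝ) ^ α ≠ 0 := (Real.rpow_pos_of_pos (hxs_pos r) α).ne'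
          rw [hx0, show (1 - α - 1 : ℝ) = -α by ring, Real.rpow_neg (hxs_pos r).le]
          simp only [hd]
          field_simp
        exact HasDerivAt.fun_sum hterm
    have htend := hasDerivAt_iff_tendsto_slope.mp hderiv
    have htend' : Filter.Tendsto (slope g 0) (nhdsWithin 0 (Set.Ioi 0))
        (nhds (∑ r, w r * (x r - xs r) / xs r ^ α)) := by
      refine htend.mono_left (nhdsWithin_mono 0 ?_)
      intro t ht
      exact Set.mem_compl_singleton_iff.mpr (ne_of_gt ht)
    refine le_of_tendsto htend' ?_
    filter_upwards [Ioo_mem_nhdsGT_of_mem (by norm_num : (0:ℝ) ∈ Set.Ico (0:ℝ) 1)] with t ht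
    have hle := hg0 t ht
    have hslope : slope g 0 t = (g t - g 0) / t := by
      rw [slope_def_field]
      ring_nf
    rw [hslope]
    exact div_nonpos_of_nonpos_of_nonneg (by linarith) ht.1.le
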